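/- arXiv:2311.17312 — 2 statements merged into one kernel-verified Lean document; each statement's English description precedes it below -/
import Mathlib

section
/- Let a = (a_1, …, a_m) be a strictly decreasing partition with m ≥ 2 and a_m = 1, let ε ∈ {0,1}^m with ε_m = 0, and let k ≥ 0. Then g(a, ε, k) = g(a', ε', k), where a' = (a_1, …, a_{m−1}) and ε' = (ε_1, …, ε_{m−1}). -/
namespace ChordExpansion

/-- The set of crossings of a chord diagram `E`, where a chord is an ordered pair `(u, v)`
with `u < v`, and a crossing is recorded as `((a, c), (b, d))` with `a < b < c < d`. -/
def crossings (E : Finset (ℕ × ℕ)) : Finset ((ℕ × ℕ) × (ℕ × ℕ)) :=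
  (E ×ˢ E).filter fun p => p.1.1 < p.2.1 ∧ p.2.1 < p.1.2 ∧ p.1.2 < p.2.2

/-- Encoding of a crossing as a natural number (used to pick a canonical crossing). -/
def encodeC (p : (ℕ × ℕ) × (ℕ × ℕ)) : ℕ :=
  Nat.pair (Nat.pair p.1.1 p.1.2) (Nat.pair p.2.1 p.2.2)

def decodeC (x : ℕ) : (ℕ × ℕ) × (ℕ × ℕ) :=
  ((x.unpair.1.unpair.1, x.unpair.1.unpair.2), (x.unpair.2.unpair.1, x.unpair.2.unpair.2))

/-- The canonical (least, in a fixed encoding) crossing of `E`. -/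
def canonCrossing (E : Finset (ℕ × ℕ)) : (ℕ × ℕ) × (ℕ × ℕ) :=
  decodeC (((crossings E).image encodeC).min.untopD 0)

/-- First result `E₁ = (E ∖ {ac, bd}) ∪ {ab, cd}` of expanding `E` at its canonical crossing. -/
def expand1 (E : Finset (ℕ × ℕ)) : Finset (ℕ × ℕ) :=
  (E \ {(canonCrossing E).1, (canonCrossing E).2}) ∪
    {((canonCrossing E).1.1, (canonCrossing E).2.1),
     ((canonCrossing E).1.2, (canonCrossing E).2.2)}

/-- Second result `E₂ = (E ∖ {ac, bd}) ∪ {ad, bc}` of expanding `E` at its canonical crossing. -/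
def expand2 (E : Finset (ℕ × ℕ)) : Finset (ℕ × ℕ) :=
  (E \ {(canonCrossing E).1, (canonCrossing E).2}) ∪
    {((canonCrossing E).1.1, (canonCrossing E).2.2),
     ((canonCrossing E).2.1, (canonCrossing E).1.2)}

/-- Fuel-based chord expansion number; since each expansion strictly decreases the number of
crossings, fuel `(crossings E).card` suffices. -/
def exAux : ℕ → Finset (ℕ × ℕ) → ℕ
  | 0, _ => 1
  | fuel + 1, E =>
    if crossings E = ∅ then 1
    else exAux fuel (expand1 E) + exAux fuel (expand2 E)

/-- The chord expansion number `ex(E)`. -/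
def exCD (E : Finset (ℕ × ℕ)) : ℕ := exAux (crossings E).card E

/-- Fuel-based chord expansion multiset. -/
def ncdAux : ℕ → Finset (ℕ × ℕ) → Multiset (Finset (ℕ × ℕ))
  | 0, E => {E}
  | fuel + 1, E =>
    if crossings E = ∅ then {E}
    else ncdAux fuel (expand1 E) + ncdAux fuel (expand2 E)

/-- The chord expansion multiset `𝒩𝒞𝒟(E)` of nonintersecting chord diagrams obtained by
iterated chord expansions. -/
def ncd (E : Finset (ℕ × ℕ)) : Multiset (Finset (ℕ × ℕ)) := ncdAux (crossings E).card E

/-- The chord diagram `E(a, ε)`: rows indexed by `1..m`, with `n = a 1` columns.  The points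
`x_1, …, x_m, z_1, …, z_n, y_n, …, y_1` in anticlockwise circular order are labelled
`x_i = i`, `z_j = m + j`, `y_j = m + 2n + 1 - j`. -/
def EDiag (m n : ℕ) (a ε : ℕ → ℕ) : Finset (ℕ × ℕ) :=
  ((Finset.Icc 1 m).filter fun i => ε i = 0).image (fun i => (i, m + 2 * n + 1 - a i)) ∪
  ((Finset.Icc 1 m).filter fun i => ε i = 1).image (fun i => (i, m + a i)) ∪
  ((Finset.Icc 1 n).filter fun j => j ∉ (Finset.Icc 1 m).image a).image
    (fun j => (m + j, m + 2 * n + 1 - j))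

/-- `e_F(U)`: the number of chords of `F` with both endpoints in `U`. -/
def eCh (F : Finset (ℕ × ℕ)) (U : Finset ℕ) : ℕ :=
  (F.filter fun c => c.1 ∈ U ∧ c.2 ∈ U).card

/-- `f(a, ε, k)`: the number of nonintersecting chord diagrams `F` in the chord expansion
multiset of `E(a, ε)` with `e_F(Y) + e_F(X ∪ Z) = k`, where `X ∪ Z` is labelled
`1..m+n` and `Y` is labelled `m+n+1..m+2n` (`n = a 1`). -/
def fCD (m : ℕ) (a ε : ℕ → ℕ) (k : ℕ) : ℕ :=
  Multiset.countP
    (fun F =>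
      eCh F (Finset.Icc (m + a 1 + 1) (m + 2 * a 1)) + eCh F (Finset.Icc 1 (m + a 1)) = k)
    (ncd (EDiag m (a 1) a ε))

/-- The boxes `(i, j)`, `1 ≤ i ≤ m`, `1 ≤ j ≤ a i`, of the Young diagram of shape `a`. -/
def boxes (m : ℕ) (a : ℕ → ℕ) : Finset (ℕ × ℕ) :=
  ((Finset.Icc 1 m) ×ˢ (Finset.Icc 1 (a 1))).filter fun p => p.2 ≤ a p.1

/-- `g(a, ε, k)`: the number of 0-1 Young diagrams of shape `a` (identified with the set `M`
of boxes carrying a `1`) such that every column has at most one `1`, row `i` has a number of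
`1`'s congruent to `ε i (mod 2)`, and there are exactly `k` `1`'s in total. -/
def gYD (m : ℕ) (a ε : ℕ → ℕ) (k : ℕ) : ℕ :=
  ((boxes m a).powerset.filter fun M =>
    (∀ j ∈ Finset.Icc 1 (a 1), (M.filter fun p => p.2 = j).card ≤ 1) ∧
    (∀ i ∈ Finset.Icc 1 m, (M.filter fun p => p.1 = i).card % 2 = ε i % 2) ∧
    M.card = k).card

/-- As `gYD`, but with no condition on the total number of `1`'s. -/
def gAll (m : ℕ) (a ε : ℕ → ℕ) : ℕ :=
  ((boxes m a).powerset.filter fun M =>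
    (∀ j ∈ Finset.Icc 1 (a 1), (M.filter fun p => p.2 = j).card ≤ 1) ∧
    (∀ i ∈ Finset.Icc 1 m, (M.filter fun p => p.1 = i).card % 2 = ε i % 2)).card


lemma mem_boxes (m : ℕ) (a : ℕ → ℕ) (p : ℕ × ℕ) :
    p ∈ boxes m a ↔ (1 ≤ p.1 ∧ p.1 ≤ m) ∧ (1 ≤ p.2 ∧ p.2 ≤ a 1) ∧ p.2 ≤ a p.1 := by
  simp [boxes, Finset.mem_filter, Finset.mem_product, Finset.mem_Icc, and_assoc]

/-- **Case 1.1 of the proof of Theorem 1.** If `a m = 1` and `ε m = 0`, then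
`g(a, ε, k) = g(a', ε', k)` where `a' = (a 1, …, a (m-1))` and `ε' = (ε 1, …, ε (m-1))`. -/
theorem g_lastRow_zero (m : ℕ) (hm : 2 ≤ m) (a ε : ℕ → ℕ)
    (ha : ∀ i, 1 ≤ i → i + 1 ≤ m → a (i + 1) < a i) (ham : a m = 1)
    (hε : ∀ i ∈ Finset.Icc 1 m, ε i = 0 ∨ ε i = 1) (hεm : ε m = 0) (k : ℕ) :
    gYD m a ε k = gYD (m - 1) a ε k := by
  unfold gYD
  congr 1
  ext M
  simp only [Finset.mem_filter, Finset.mem_powerset]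
  constructor
  · rintro ⟨hsub, hcol, hrow, hcard⟩
    have hrm : (M.filter fun p => p.1 = m).card = 0 := by
      have h1 : (M.filter fun p => p.1 = m) ⊆ {(m, 1)} := by
        intro p hp
        simp only [Finset.mem_filter] at hp
        have h := (mem_boxes m a p).mp (hsub hp.1)
        have h2 : p.2 = 1 := by
          have := h.2.2
          rw [hp.2, ham] at this
          omega
        have : p = (m, 1) := Prod.ext hp.2 h2
        simp [this]
      have h2 := Finset.card_le_card h1
      simp only [Finset.card_singleton] at h2
      have h3 := hrow m (by simp [Finset.mem_Icc]; omega)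
      rw [hεm] at h3
      omega
    rw [Finset.card_eq_zero, Finset.filter_eq_empty_iff] at hrm
    refine ⟨?_, hcol, ?_, hcard⟩
    · intro p hp
      have h1 := (mem_boxes m a p).mp (hsub hp)
      rw [mem_boxes]
      have := hrm hp
      exact ⟨⟨h1.1.1, by omega⟩, h1.2⟩
    · intro i hi
      exact hrow i (by simp only [Finset.mem_Icc] at hi ⊢; omega)
  · rintro ⟨hsub, hcol, hrow, hcard⟩
    refine ⟨?_, hcol, ?_, hcard⟩
    · intro p hp
      have h1 := (mem_boxes (m - 1) a p).mp (hsub hp)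
      rw [mem_boxes]
      exact ⟨⟨h1.1.1, by omega⟩, h1.2⟩
    · intro i hi
      simp only [Finset.mem_Icc] at hi
      rcases Nat.lt_or_ge i m with h | h
      · exact hrow i (by simp only [Finset.mem_Icc]; omega)
      · have him : i = m := by omega
        have he : (M.filter fun p => p.1 = i) = ∅ := by
          rw [Finset.filter_eq_empty_iff]
          intro p hp
          have := (mem_boxes (m - 1) a p).mp (hsub hp)
          omega
        subst him
        rw [he, hεm]
        rfl

end ChordExpansion
end

section
/- Let E be a chord diagram and let e ∈ E be an isolated chord, i.e. a chord that crosses no other chord of E. Then ex(E) = ex(E ∖ {e}). -/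
namespace ChordExpansion

/-- `E` is a chord diagram: each chord is an increasing pair and no two distinct chords
share an endpoint. -/
def IsChordDiagram (E : Finset (ℕ × ℕ)) : Prop :=
  (∀ c ∈ E, c.1 < c.2) ∧
    ∀ c ∈ E, ∀ d ∈ E, c ≠ d → c.1 ≠ d.1 ∧ c.1 ≠ d.2 ∧ c.2 ≠ d.1 ∧ c.2 ≠ d.2

/-- The chords `c = (c.1, c.2)` and `d = (d.1, d.2)` cross: `c.1 < d.1 < c.2 < d.2`. -/
def Crosses (c d : ℕ × ℕ) : Prop := c.1 < d.1 ∧ d.1 < c.2 ∧ c.2 < d.2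

/-- Invariant: `e` is an increasing chord whose endpoints are disjoint from those of every
other chord of `E` and which crosses no chord of `E`. -/
def Iso (e : ℕ × ℕ) (E : Finset (ℕ × ℕ)) : Prop :=
  e.1 < e.2 ∧ ∀ d ∈ E, d ≠ e →
    (e.1 ≠ d.1 ∧ e.1 ≠ d.2 ∧ e.2 ≠ d.1 ∧ e.2 ≠ d.2) ∧ ¬Crosses e d ∧ ¬Crosses d e

lemma crossings_erase {E : Finset (ℕ × ℕ)} {e : ℕ × ℕ} (h : Iso e E) :
    crossings (E.erase e) = crossings E := by
  ext p
  simp only [crossings, Finset.mem_filter, Finset.mem_product, Finset.mem_erase]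
  constructor
  · rintro ⟨⟨⟨_, h1⟩, ⟨_, h2⟩⟩, hc⟩; exact ⟨⟨h1, h2⟩, hc⟩
  · rintro ⟨⟨h1, h2⟩, hc⟩
    refine ⟨⟨⟨?_, h1⟩, ⟨?_, h2⟩⟩, hc⟩
    · intro hp
      have hne : p.2 ≠ e := by
        intro hq
        rw [hp, hq] at hc
        exact absurd hc.1 (lt_irrefl _)
      rw [hp] at hc
      exact ((h.2 p.2 h2 hne).2.1) ⟨hc.1, hc.2.1, hc.2.2⟩
    · intro hp
      have hne : p.1 ≠ e := by
        intro hq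
        rw [hp, hq] at hc
        exact absurd hc.1 (lt_irrefl _)
      rw [hp] at hc
      exact ((h.2 p.1 h1 hne).2.2) ⟨hc.1, hc.2.1, hc.2.2⟩

lemma decode_encode (p : (ℕ × ℕ) × (ℕ × ℕ)) : decodeC (encodeC p) = p := by
  simp [decodeC, encodeC, Nat.unpair_pair]

lemma canonCrossing_mem {E : Finset (ℕ × ℕ)} (h : crossings E ≠ ∅) :
    canonCrossing E ∈ crossings E := by
  have hne : ((crossings E).image encodeC).Nonempty :=
    (Finset.image_nonempty).2 (Finset.nonempty_iff_ne_empty.2 h)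
  obtain ⟨m, hm⟩ := Finset.min_of_nonempty hne
  have hmem := Finset.mem_of_min hm
  obtain ⟨p, hp, rfl⟩ := Finset.mem_image.mp hmem
  unfold canonCrossing
  rw [hm]
  rw [WithTop.untopD_coe, decode_encode]
  exact hp

lemma geom {u v a b c d : ℕ} (huv : u < v) (hab : a < b) (hbc : b < c) (hcd : c < d)
    (hua : u ≠ a) (hub : u ≠ b) (huc : u ≠ c) (hud : u ≠ d)
    (hva : v ≠ a) (hvb : v ≠ b) (hvc : v ≠ c) (hvd : v ≠ d)
    (h1 : ¬Crosses (u, v) (a, c)) (h2 : ¬Crosses (a, c) (u, v))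
    (h3 : ¬Crosses (u, v) (b, d)) (h4 : ¬Crosses (b, d) (u, v)) :
    (¬Crosses (u, v) (a, b) ∧ ¬Crosses (a, b) (u, v)) ∧
    (¬Crosses (u, v) (c, d) ∧ ¬Crosses (c, d) (u, v)) ∧
    (¬Crosses (u, v) (a, d) ∧ ¬Crosses (a, d) (u, v)) ∧
    (¬Crosses (u, v) (b, c) ∧ ¬Crosses (b, c) (u, v)) := by
  simp only [Crosses] at *
  omega

set_option maxHeartbeats 1600000 in
lemma exAux_erase : ∀ (fuel : ℕ) (E : Finset (ℕ × ℕ)) (e : ℕ × ℕ), Iso e E →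
    exAux fuel E = exAux fuel (E.erase e) := by
  intro fuel
  induction fuel with
  | zero => intro E e _; rfl
  | succ n ih =>
    intro E e hIso
    rw [exAux, exAux, crossings_erase hIso]
    by_cases hc : crossings E = ∅
    · simp [hc]
    · simp only [hc, if_false]
      -- canonical crossing data
      have hcanon : canonCrossing (E.erase e) = canonCrossing E := by
        unfold canonCrossing; rw [crossings_erase hIso]
      have hS := canonCrossing_mem hc
      set S := canonCrossing E with hSdef
      simp only [crossings, Finset.mem_filter, Finset.mem_product] at hS
      obtain ⟨⟨hS1, hS2⟩, hab, hbc, hcd⟩ := hS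
      obtain ⟨u, v⟩ := e
      have huv : u < v := hIso.1
      -- e differs from both chords of the crossing
      have heS1 : (u, v) ≠ S.1 := by
        intro h
        have hne : S.2 ≠ (u, v) := by
          intro h2
          rw [← h, h2] at hab
          exact absurd hab (lt_irrefl _)
        apply (hIso.2 S.2 hS2 hne).2.1
        rw [h]
        exact ⟨hab, hbc, hcd⟩
      have heS2 : (u, v) ≠ S.2 := by
        intro h
        have hne : S.1 ≠ (u, v) := by
          intro h2
          rw [h2, ← h] at hab
          exact absurd hab (lt_irrefl _)
        apply (hIso.2 S.1 hS1 hne).2.2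
        rw [h]
        exact ⟨hab, hbc, hcd⟩
      have hd1 := hIso.2 S.1 hS1 (fun h => heS1 h.symm)
      have hd2 := hIso.2 S.2 hS2 (fun h => heS2 h.symm)
      obtain ⟨⟨hua, huc, hva, hvc⟩, he1, h1e⟩ := hd1
      obtain ⟨⟨hub, hud, hvb, hvd⟩, he2, h2e⟩ := hd2
      have hgeom := geom (a := S.1.1) (b := S.2.1) (c := S.1.2) (d := S.2.2)
        huv hab hbc hcd hua hub huc hud hva hvb hvc hvd
        (by simpa [Crosses] using he1) (by simpa [Crosses] using h1e)
        (by simpa [Crosses] using he2) (by simpa [Crosses] using h2e)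
      -- e is distinct from the new chords
      have hN1a : (S.1.1, S.2.1) ≠ (u, v) := by
        intro h; exact hua (congrArg Prod.fst h).symm
      have hN1b : (S.1.2, S.2.2) ≠ (u, v) := by
        intro h; exact huc (congrArg Prod.fst h).symm
      have hN2a : (S.1.1, S.2.2) ≠ (u, v) := by
        intro h; exact hua (congrArg Prod.fst h).symm
      have hN2b : (S.2.1, S.1.2) ≠ (u, v) := by
        intro h; exact hub (congrArg Prod.fst h).symm
      -- erase commutes with expansion
      have hexp1 : expand1 (E.erase (u, v)) = (expand1 E).erase (u, v) := by
        unfold expand1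
        rw [hcanon, ← hSdef]
        ext d
        simp only [Finset.mem_union, Finset.mem_sdiff, Finset.mem_erase,
          Finset.mem_insert, Finset.mem_singleton]
        constructor
        · rintro (⟨⟨hd, hdE⟩, hnS⟩ | (rfl | rfl))
          · exact ⟨hd, Or.inl ⟨hdE, hnS⟩⟩
          · exact ⟨hN1a, Or.inr (Or.inl rfl)⟩
          · exact ⟨hN1b, Or.inr (Or.inr rfl)⟩
        · rintro ⟨hd, (⟨hdE, hnS⟩ | h)⟩
          · exact Or.inl ⟨⟨hd, hdE⟩, hnS⟩
          · exact Or.inr h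
      have hexp2 : expand2 (E.erase (u, v)) = (expand2 E).erase (u, v) := by
        unfold expand2
        rw [hcanon, ← hSdef]
        ext d
        simp only [Finset.mem_union, Finset.mem_sdiff, Finset.mem_erase,
          Finset.mem_insert, Finset.mem_singleton]
        constructor
        · rintro (⟨⟨hd, hdE⟩, hnS⟩ | (rfl | rfl))
          · exact ⟨hd, Or.inl ⟨hdE, hnS⟩⟩
          · exact ⟨hN2a, Or.inr (Or.inl rfl)⟩
          · exact ⟨hN2b, Or.inr (Or.inr rfl)⟩
        · rintro ⟨hd, (⟨hdE, hnS⟩ | h)⟩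
          · exact Or.inl ⟨⟨hd, hdE⟩, hnS⟩
          · exact Or.inr h
      -- Iso is preserved by expansion
      have hIso1 : Iso (u, v) (expand1 E) := by
        refine ⟨huv, ?_⟩
        intro d hd hdne
        unfold expand1 at hd
        rw [← hSdef] at hd
        simp only [Finset.mem_union, Finset.mem_sdiff, Finset.mem_insert,
          Finset.mem_singleton] at hd
        rcases hd with ⟨hdE, _⟩ | (rfl | rfl)
        · exact hIso.2 d hdE hdne
        · exact ⟨⟨hua, hub, hva, hvb⟩, hgeom.1⟩
        · exact ⟨⟨huc, hud, hvc, hvd⟩, hgeom.2.1⟩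
      have hIso2 : Iso (u, v) (expand2 E) := by
        refine ⟨huv, ?_⟩
        intro d hd hdne
        unfold expand2 at hd
        rw [← hSdef] at hd
        simp only [Finset.mem_union, Finset.mem_sdiff, Finset.mem_insert,
          Finset.mem_singleton] at hd
        rcases hd with ⟨hdE, _⟩ | (rfl | rfl)
        · exact hIso.2 d hdE hdne
        · exact ⟨⟨hua, hud, hva, hvd⟩, hgeom.2.2.1⟩
        · exact ⟨⟨hub, huc, hvb, hvc⟩, hgeom.2.2.2⟩
      rw [hexp1, hexp2, ← ih (expand1 E) (u, v) hIso1, ← ih (expand2 E) (u, v) hIso2]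

/-- Deleting an isolated chord does not change the chord expansion number. -/
theorem ex_erase_isolated (E : Finset (ℕ × ℕ)) (hE : IsChordDiagram E) (e : ℕ × ℕ)
    (he : e ∈ E) (hiso : ∀ d ∈ E, d ≠ e → ¬Crosses e d ∧ ¬Crosses d e) :
    exCD E = exCD (E.erase e) := by
  have hIso : Iso e E := by
    refine ⟨hE.1 e he, ?_⟩
    intro d hd hdne
    exact ⟨hE.2 e he d hd (fun h => hdne h.symm), hiso d hd hdne⟩
  unfold exCD
  rw [crossings_erase hIso]
  exact exAux_erase _ E e hIso

end ChordExpansion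
end
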